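/- In the joint-density setup for (U, W, A): assume W ⟂ A | U holds in density form, pU(u) > 0 for μ-almost every u, pUA(u,a) > 0 for (μ⊗α)-almost every (u,a), pWA(w,a) > 0 for (ν⊗α)-almost every (w,a), and pA(a) > 0 for α-almost every a. Then for (α⊗α)-almost every (a, a') the following holds: for every bounded measurable ℓ : W → ℝ such that ∫ ℓ(w) h(u,w,a) dν(w) = 0 for μ-almost every u (i.e. E[ℓ(W) | U, A = a] = 0), one has ∫ ℓ(w) · r_{a,a'}(w) · pWA(w,a) dν(w) = 0, where r_{a,a'}(w) = pWA(w,a')·pA(a)/(pWA(w,a)·pA(a')). That is, the ATT density ratio r_{a,a'} is orthogonal in L²(p_{W|A=a}) to every such ℓ. -/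

import Mathlib

open MeasureTheory

/-- The ATT density ratio `r_{a,a'}(w) = pWA(w,a')·pA(a)/(pWA(w,a)·pA(a'))` is
orthogonal in `L²(p_{W|A=a})` to every bounded measurable `ℓ` with `E[ℓ(W) | U, A = a] = 0`,
for `(α⊗α)`-a.e. `(a, a')`, in the joint-density setup for `(U, W, A)` with `W ⟂ A | U` and
positivity of the involved densities. -/
theorem att_density_ratio_orthogonal
    {U W A : Type*} [MeasurableSpace U] [MeasurableSpace W] [MeasurableSpace A]
    (μ : Measure U) (ν : Measure W) (α : Measure A)
    [SigmaFinite μ] [SigmaFinite ν] [SigmaFinite α]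
    (h : U × W × A → ℝ) (h_meas : Measurable h) (h_nonneg : ∀ x, 0 ≤ h x)
    (h_int : Integrable h (μ.prod (ν.prod α)))
    (pU : U → ℝ) (hpU : ∀ u, pU u = ∫ a, ∫ w, h (u, w, a) ∂ν ∂α)
    (pA : A → ℝ) (hpA : ∀ a, pA a = ∫ w, ∫ u, h (u, w, a) ∂μ ∂ν)
    (pUW : U × W → ℝ) (hpUW : ∀ u w, pUW (u, w) = ∫ a, h (u, w, a) ∂α)
    (pUA : U × A → ℝ) (hpUA : ∀ u a, pUA (u, a) = ∫ w, h (u, w, a) ∂ν)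
    (pWA : W × A → ℝ) (hpWA : ∀ w a, pWA (w, a) = ∫ u, h (u, w, a) ∂μ)
    (ci : ∀ᵐ x ∂μ.prod (ν.prod α), h x * pU x.1 = pUW (x.1, x.2.1) * pUA (x.1, x.2.2))
    (hpU_pos : ∀ᵐ u ∂μ, 0 < pU u)
    (hpUA_pos : ∀ᵐ x ∂μ.prod α, 0 < pUA x)
    (hpWA_pos : ∀ᵐ x ∂ν.prod α, 0 < pWA x)
    (hpA_pos : ∀ᵐ a ∂α, 0 < pA a) :
    ∀ᵐ x ∂α.prod α, ∀ ℓ : W → ℝ, Measurable ℓ → (∃ C, ∀ w, |ℓ w| ≤ C) →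
      (∀ᵐ u ∂μ, ∫ w, ℓ w * h (u, w, x.1) ∂ν = 0) →
      ∫ w, ℓ w * (pWA (w, x.2) * pA x.1 / (pWA (w, x.1) * pA x.2)) * pWA (w, x.1) ∂ν = 0 := by
  -- The rearrangement map `T : A × (U × W) → U × (W × A)`
  have hT : MeasurePreserving (fun z : A × (U × W) => (z.2.1, (z.2.2, z.1)))
      (α.prod (μ.prod ν)) (μ.prod (ν.prod α)) := by
    have h1 : MeasurePreserving (Prod.swap : A × (U × W) → (U × W) × A)
        (α.prod (μ.prod ν)) ((μ.prod ν).prod α) := Measure.measurePreserving_swap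
    have h2 := MeasureTheory.measurePreserving_prodAssoc μ ν α
    exact h2.comp h1
  -- a.e. slice integrability of `h` in the `A` variable
  have h_int' : Integrable ((fun z : A × (U × W) => h (z.2.1, (z.2.2, z.1))))
      (α.prod (μ.prod ν)) := by
    have := (hT.integrable_comp h_meas.aestronglyMeasurable).2 h_int
    exact this
  have h_int_ae : ∀ᵐ a ∂α, Integrable (fun y : U × W => h (y.1, y.2, a)) (μ.prod ν) :=
    h_int'.prod_right_ae
  -- a.e. slice conditional independence
  have ci' := hT.quasiMeasurePreserving.ae ci
  have ci_ae : ∀ᵐ a ∂α, ∀ᵐ y ∂μ.prod ν,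
      h (y.1, y.2, a) * pU y.1 = pUW (y.1, y.2) * pUA (y.1, a) :=
    Measure.ae_ae_of_ae_prod ci'
  -- a.e. slice positivity of pUA
  have hUA' := (Measure.measurePreserving_swap (μ:=α) (ν:=μ)).quasiMeasurePreserving.ae hpUA_pos
  have hUA_ae : ∀ᵐ a ∂α, ∀ᵐ u ∂μ, 0 < pUA (u, a) := Measure.ae_ae_of_ae_prod hUA'
  -- a.e. slice positivity of pWA
  have hWA' := (Measure.measurePreserving_swap (μ:=α) (ν:=ν)).quasiMeasurePreserving.ae hpWA_pos
  have hWA_ae : ∀ᵐ a ∂α, ∀ᵐ w ∂ν, 0 < pWA (w, a) := Measure.ae_ae_of_ae_prod hWA'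
  -- the "good" set of values of a
  have hGood : ∀ᵐ a ∂α,
      (Integrable (fun y : U × W => h (y.1, y.2, a)) (μ.prod ν)) ∧
      (∀ᵐ y ∂μ.prod ν, h (y.1, y.2, a) * pU y.1 = pUW (y.1, y.2) * pUA (y.1, a)) ∧
      (∀ᵐ u ∂μ, 0 < pUA (u, a)) ∧ (∀ᵐ w ∂ν, 0 < pWA (w, a)) ∧ 0 < pA a := by
    filter_upwards [h_int_ae, ci_ae, hUA_ae, hWA_ae, hpA_pos] with a h1 h2 h3 h4 h5
    exact ⟨h1, h2, h3, h4, h5⟩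
  have hfst := (Measure.quasiMeasurePreserving_fst (μ:=α) (ν:=α)).ae hGood
  have hsnd := (Measure.quasiMeasurePreserving_snd (μ:=α) (ν:=α)).ae hGood
  filter_upwards [hfst, hsnd] with x hx1 hx2
  obtain ⟨a, a'⟩ := x
  simp only at hx1 hx2 ⊢
  obtain ⟨_, ci_a, posUA_a, posWA_a, posA_a⟩ := hx1
  obtain ⟨int_a', ci_a', _, _, posA_a'⟩ := hx2
  intro ℓ hℓ_meas hℓ_bdd hzero
  obtain ⟨C, hC⟩ := hℓ_bdd
  -- Step 1: ∀ᵐ u, ∫ w, ℓ w * h (u, w, a') ∂ν = 0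
  have key : ∀ᵐ u ∂μ, ∫ w, ℓ w * h (u, w, a') ∂ν = 0 := by
    filter_upwards [Measure.ae_ae_of_ae_prod ci_a, Measure.ae_ae_of_ae_prod ci_a',
      hpU_pos, posUA_a, hzero] with u hwa hwa' hpu hua hz
    have hJ : (∫ w, ℓ w * pUW (u, w) ∂ν) * pUA (u, a) = 0 := by
      rw [← MeasureTheory.integral_mul_const]
      have : ∫ w, ℓ w * pUW (u, w) * pUA (u, a) ∂ν
          = (∫ w, ℓ w * h (u, w, a) ∂ν) * pU u := by
        rw [← MeasureTheory.integral_mul_const]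
        refine integral_congr_ae ?_
        filter_upwards [hwa] with w hw
        rw [mul_assoc, ← hw]; ring
      rw [this, hz, zero_mul]
    have hJ0 : (∫ w, ℓ w * pUW (u, w) ∂ν) = 0 :=
      (mul_eq_zero.1 hJ).resolve_right (ne_of_gt hua)
    have : (∫ w, ℓ w * h (u, w, a') ∂ν) * pU u = 0 := by
      rw [← MeasureTheory.integral_mul_const]
      have : ∫ w, ℓ w * h (u, w, a') * pU u ∂ν
          = ∫ w, ℓ w * pUW (u, w) * pUA (u, a') ∂ν := by
        refine integral_congr_ae ?_
        filter_upwards [hwa'] with w hw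
        rw [mul_assoc, hw]; ring
      rw [this, MeasureTheory.integral_mul_const, hJ0, zero_mul]
    exact (mul_eq_zero.1 this).resolve_right (ne_of_gt hpu)
  -- Step 2: ∫ w, ℓ w * pWA (w, a') ∂ν = 0
  have hint2 : Integrable (fun y : U × W => ℓ y.2 * h (y.1, y.2, a')) (μ.prod ν) := by
    refine int_a'.bdd_mul (c := C) ?_ (Filter.Eventually.of_forall fun y => ?_)
    · exact (hℓ_meas.comp measurable_snd).aestronglyMeasurable
    · simpa [Real.norm_eq_abs] using hC y.2
  have hI : ∫ w, ℓ w * pWA (w, a') ∂ν = 0 := by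
    have hswap := MeasureTheory.integral_integral_swap
      (f := fun u w => ℓ w * h (u, w, a')) hint2
    have h1 : ∫ w, ℓ w * pWA (w, a') ∂ν = ∫ w, ∫ u, ℓ w * h (u, w, a') ∂μ ∂ν := by
      refine integral_congr_ae (Filter.Eventually.of_forall fun w => ?_)
      simp only
      rw [hpWA, MeasureTheory.integral_const_mul]
    rw [h1, ← hswap]
    have h2 : ∫ u, ∫ w, ℓ w * h (u, w, a') ∂ν ∂μ = ∫ (_ : U), (0 : ℝ) ∂μ := by
      refine integral_congr_ae ?_
      filter_upwards [key] with u hu using hu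
    rw [h2, integral_zero]
  -- Step 3: conclude
  have h3 : ∫ w, ℓ w * (pWA (w, a') * pA a / (pWA (w, a) * pA a')) * pWA (w, a) ∂ν
      = ∫ w, pA a / pA a' * (ℓ w * pWA (w, a')) ∂ν := by
    refine integral_congr_ae ?_
    filter_upwards [posWA_a] with w hw
    have hwa : pWA (w, a) ≠ 0 := ne_of_gt hw
    have hpa' : pA a' ≠ 0 := ne_of_gt posA_a'
    field_simp
  rw [h3, MeasureTheory.integral_const_mul, hI, mul_zero]
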